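/- arXiv:1706.06596 — 7 statements merged into one kernel-verified Lean document; each statement's English description precedes it below -/
import Mathlib

section
/- (Pearle-Braunstein-Caves inequality) Let N ≥ 2 and let A_1,...,A_N, B_1,...,B_N : Λ → [-1,1] be random variables on a probability space (Λ, P). Then |E(A_1B_1)+E(A_2B_1)| + |E(A_2B_2)+E(A_3B_2)| + ... + |E(A_NB_N) - E(A_1B_N)| ≤ 2N - 2. -/
open MeasureTheory Finset


lemma pointwise_chain (a : ℕ → ℝ) (ha : ∀ i, |a i| ≤ 1) :
    ∀ N, 2 ≤ N → ∑ i ∈ Finset.Ico 1 N, |a i + a (i+1)| + |a N - a 1| ≤ 2 * N - 2 := by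
  intro N hN
  induction N with
  | zero => omega
  | succ n ih =>
    rcases Nat.lt_or_ge n 2 with h | h
    · interval_cases n
      · omega
      · have h1 := abs_le.mp (ha 1)
        have h2 := abs_le.mp (ha 2)
        rw [show Finset.Ico 1 2 = {1} from rfl, Finset.sum_singleton]
        push_cast
        rcases abs_cases (a 1 + a 2) with ⟨e1,_⟩|⟨e1,_⟩ <;>
          rcases abs_cases (a 2 - a 1) with ⟨e2,_⟩|⟨e2,_⟩ <;> rw [e1, e2] <;> linarith
    · have key : |a n + a (n+1)| + |a (n+1) - a 1| ≤ 2 + |a n - a 1| := by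
        have h1 := abs_le.mp (ha (n+1)); have h0 := abs_le.mp (ha 1); have hn := abs_le.mp (ha n)
        rcases abs_cases (a n + a (n+1)) with ⟨e1,s1⟩|⟨e1,s1⟩ <;>
          rcases abs_cases (a (n+1) - a 1) with ⟨e2,s2⟩|⟨e2,s2⟩ <;>
          rcases abs_cases (a n - a 1) with ⟨e3,s3⟩|⟨e3,s3⟩ <;>
          rw [e1, e2, e3] <;> linarith
      have hih := ih h
      rw [Finset.sum_Ico_succ_top (by omega : 1 ≤ n)]
      push_cast at hih ⊢
      linarith


/-- Pearle-Braunstein-Caves chained inequality: for N ≥ 2 and random variables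
    A₁,…,A_N, B₁,…,B_N taking values in [-1,1],
    |E(A₁B₁)+E(A₂B₁)| + … + |E(A_N B_N) - E(A₁ B_N)| ≤ 2N - 2. -/
theorem pearle_braunstein_caves
    {Ω : Type*} [MeasurableSpace Ω] (μ : Measure Ω) [IsProbabilityMeasure μ]
    (N : ℕ) (hN : 2 ≤ N) (A B : ℕ → Ω → ℝ)
    (hAmeas : ∀ i, Measurable (A i)) (hBmeas : ∀ i, Measurable (B i))
    (hAbound : ∀ i x, A i x ∈ Set.Icc (-1 : ℝ) 1)
    (hBbound : ∀ i x, B i x ∈ Set.Icc (-1 : ℝ) 1) :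
    (∑ i ∈ Finset.Ico 1 N,
        |(∫ x, A i x * B i x ∂μ) + ∫ x, A (i + 1) x * B i x ∂μ|)
      + |(∫ x, A N x * B N x ∂μ) - ∫ x, A 1 x * B N x ∂μ|
      ≤ 2 * (N : ℝ) - 2 := by
  have habsI : ∀ f : Ω → ℝ, |∫ x, f x ∂μ| ≤ ∫ x, |f x| ∂μ := fun f => by
    simpa [Real.norm_eq_abs] using norm_integral_le_integral_norm f
  have hA1 : ∀ i x, |A i x| ≤ 1 := fun i x => abs_le.mpr ⟨(hAbound i x).1, (hAbound i x).2⟩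
  have hB1 : ∀ i x, |B i x| ≤ 1 := fun i x => abs_le.mpr ⟨(hBbound i x).1, (hBbound i x).2⟩
  have hint : ∀ (f : Ω → ℝ), Measurable f → (∀ x, |f x| ≤ 2) → Integrable f μ := fun f hm hb =>
    ⟨hm.aestronglyMeasurable,
      HasFiniteIntegral.of_bounded (C := 2) (Filter.Eventually.of_forall fun x => by
        simpa using hb x)⟩
  have hintAB : ∀ i j, Integrable (fun x => A i x * B j x) μ := fun i j =>
    hint _ ((hAmeas i).mul (hBmeas j)) (fun x => by
      rw [abs_mul]
      calc |A i x| * |B j x| ≤ 1 * 1 :=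
            mul_le_mul (hA1 i x) (hB1 j x) (abs_nonneg _) zero_le_one
        _ ≤ 2 := by norm_num)
  -- step: per-term bound |∫ AᵢBⱼ + ∫ AₖBⱼ| ≤ ∫ |Aᵢ + Aₖ|
  have hplus : ∀ i k j, |(∫ x, A i x * B j x ∂μ) + ∫ x, A k x * B j x ∂μ|
      ≤ ∫ x, |A i x + A k x| ∂μ := by
    intro i k j
    rw [← integral_add (hintAB i j) (hintAB k j)]
    have : ∀ x, A i x * B j x + A k x * B j x = (A i x + A k x) * B j x := fun x => by ring
    simp_rw [this]
    refine (habsI _).trans (integral_mono ?_ ?_ ?_)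
    · exact (hint _ (((hAmeas i).add (hAmeas k)).mul (hBmeas j)) (fun x => by
        show |(A i x + A k x) * B j x| ≤ 2
        rw [abs_mul]
        calc |A i x + A k x| * |B j x| ≤ 2 * 1 := by
              refine mul_le_mul ((abs_add_le _ _).trans (by linarith [hA1 i x, hA1 k x]))
                (hB1 j x) (abs_nonneg _) (by norm_num)
          _ = 2 := by norm_num)).abs
    · exact hint _ (((hAmeas i).add (hAmeas k)).abs) (fun x => by
        rw [abs_abs]; exact (abs_add_le _ _).trans (by linarith [hA1 i x, hA1 k x]))
    · intro x
      dsimp only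
      rw [abs_mul]
      exact mul_le_of_le_one_right (abs_nonneg _) (hB1 j x)
  have hminus : |(∫ x, A N x * B N x ∂μ) - ∫ x, A 1 x * B N x ∂μ|
      ≤ ∫ x, |A N x - A 1 x| ∂μ := by
    rw [← integral_sub (hintAB N N) (hintAB 1 N)]
    have : ∀ x, A N x * B N x - A 1 x * B N x = (A N x - A 1 x) * B N x := fun x => by ring
    simp_rw [this]
    refine (habsI _).trans (integral_mono ?_ ?_ ?_)
    · exact (hint _ (((hAmeas N).sub (hAmeas 1)).mul (hBmeas N)) (fun x => by
        show |(A N x - A 1 x) * B N x| ≤ 2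
        rw [abs_mul]
        calc |A N x - A 1 x| * |B N x| ≤ 2 * 1 := by
              refine mul_le_mul ((abs_sub _ _).trans (by linarith [hA1 N x, hA1 1 x]))
                (hB1 N x) (abs_nonneg _) (by norm_num)
          _ = 2 := by norm_num)).abs
    · exact hint _ (((hAmeas N).sub (hAmeas 1)).abs) (fun x => by
        rw [abs_abs]; exact (abs_sub _ _).trans (by linarith [hA1 N x, hA1 1 x]))
    · intro x
      dsimp only
      rw [abs_mul]
      exact mul_le_of_le_one_right (abs_nonneg _) (hB1 N x)
  have habs_int : ∀ i k, Integrable (fun x => |A i x + A k x|) μ := fun i k =>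
    hint _ (((hAmeas i).add (hAmeas k)).abs) (fun x => by
      rw [abs_abs]; exact (abs_add_le _ _).trans (by linarith [hA1 i x, hA1 k x]))
  calc (∑ i ∈ Finset.Ico 1 N,
        |(∫ x, A i x * B i x ∂μ) + ∫ x, A (i + 1) x * B i x ∂μ|)
      + |(∫ x, A N x * B N x ∂μ) - ∫ x, A 1 x * B N x ∂μ|
      ≤ (∑ i ∈ Finset.Ico 1 N, ∫ x, |A i x + A (i+1) x| ∂μ)
        + ∫ x, |A N x - A 1 x| ∂μ := by
        exact add_le_add (Finset.sum_le_sum fun i _ => hplus i (i+1) i) hminus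
    _ = ∫ x, (∑ i ∈ Finset.Ico 1 N, |A i x + A (i+1) x|) + |A N x - A 1 x| ∂μ := by
        rw [integral_add (integrable_finset_sum _ fun i _ => habs_int i (i+1))
          (hint (fun x => |A N x - A 1 x|) (((hAmeas N).sub (hAmeas 1)).abs) (fun x => by
            rw [abs_abs]; exact (abs_sub _ _).trans (by linarith [hA1 N x, hA1 1 x]))),
          integral_finset_sum _ fun i _ => habs_int i (i+1)]
    _ ≤ ∫ x, (2 * (N:ℝ) - 2) ∂μ := by
        refine integral_mono ?_ (integrable_const _) ?_
        · exact (integrable_finset_sum _ fun i _ => habs_int i (i+1)).add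
            (hint _ (((hAmeas N).sub (hAmeas 1)).abs) (fun x => by
              rw [abs_abs]; exact (abs_sub _ _).trans (by linarith [hA1 N x, hA1 1 x])))
        · intro x
          exact pointwise_chain (fun i => A i x) (fun i => hA1 i x) N hN
    _ = 2 * (N:ℝ) - 2 := by simp
end

section
/- For all integers N ≥ 2, the quantum value 2N·cos(π/(2N)) strictly exceeds the local-realist bound 2N - 2. -/
open Real

/-- For all integers N ≥ 2, the quantum value 2N·cos(π/(2N)) strictly exceeds
    the local-realist bound 2N - 2. -/
theorem quantum_exceeds_classical (N : ℕ) (hN : 2 ≤ N) :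
    2 * (N : ℝ) - 2 < 2 * (N : ℝ) * Real.cos (π / (2 * N)) := by
  have hNR : (2 : ℝ) ≤ N := by exact_mod_cast hN
  have hNpos : (0 : ℝ) < N := by linarith
  have hθ : π / (2 * N) ≠ 0 := by positivity
  have hcos := Real.one_sub_sq_div_two_lt_cos hθ
  have hπ : π < 3.2 := by linarith [Real.pi_lt_d2]
  have hπ0 : 0 < π := Real.pi_pos
  have key : 2 * (N : ℝ) - 2 ≤ 2 * N * (1 - (π / (2 * N)) ^ 2 / 2) := by
    rw [div_pow]
    have h1 : (π / (2 * N)) ^ 2 ≤ π ^ 2 / (2 * N) ^ 2 := le_of_eq (div_pow π (2*N) 2)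
    have h2 : π ^ 2 < 16 := by nlinarith
    have h3 : (2 : ℝ) * N ≤ (2 * N) ^ 2 / 4 * 2 := by nlinarith
    rw [mul_sub, mul_one]
    have : 2 * (N : ℝ) * (π ^ 2 / (2 * N) ^ 2 / 2) ≤ 2 := by
      rw [div_div, ← mul_div_assoc, div_le_iff₀ (by positivity : (0:ℝ) < (2 * N) ^ 2 * 2)]
      nlinarith
    linarith
  calc 2 * (N : ℝ) - 2 ≤ 2 * N * (1 - (π / (2 * N)) ^ 2 / 2) := key
    _ < 2 * N * Real.cos (π / (2 * N)) := by
        apply mul_lt_mul_of_pos_left hcos (by positivity)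
end

section
/- (PBC with coincidence probability) Let N ≥ 2, let A_1,...,A_N, B_1,...,B_N : Λ → [-1,1] be random variables, and let Λ_1,...,Λ_{2N} be measurable events with P(Λ_i) ≥ γ for all i, where 0 < γ ≤ 1. Define X_i = A_{a_i}B_{b_i} with the index sequences a = (1,2,2,3,3,...,N,N,1) and b = (1,1,2,2,...,N,N), and S_{C,N} = |E(X_1|Λ_1)+E(X_2|Λ_2)| + |E(X_3|Λ_3)+E(X_4|Λ_4)| + ... + |E(X_{2N-1}|Λ_{2N-1}) - E(X_{2N}|Λ_{2N})|. Then S_{C,N} ≤ (4N-2)/γ - 2N. -/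
open MeasureTheory Real Finset

lemma chain_abs (n : ℕ) (hn : 1 ≤ n) (f : ℕ → ℝ) (hf : ∀ i, |f i| ≤ 1) :
    ∑ k ∈ Finset.range (n-1), |f (k+1) + f (k+2)| + |f n - f 1| ≤ 2*n - 2 := by
  have tele : f n - f 1 = ∑ k ∈ Finset.range (n-1), (f (k+2) - f (k+1)) := by
    have h := Finset.sum_range_sub (fun i => f (i+1)) (n-1)
    have hn' : n - 1 + 1 = n := by omega
    rw [hn'] at h
    exact h.symm
  have h1 : |f n - f 1| ≤ ∑ k ∈ Finset.range (n-1), |f (k+2) - f (k+1)| := by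
    rw [tele]; exact Finset.abs_sum_le_sum_abs _ _
  have h2 : ∀ k, |f (k+1) + f (k+2)| + |f (k+2) - f (k+1)| ≤ 2 := by
    intro k
    have a := abs_le.mp (hf (k+1)); have b := abs_le.mp (hf (k+2))
    rcases abs_cases (f (k+1) + f (k+2)) with ⟨h,_⟩|⟨h,_⟩ <;>
      rcases abs_cases (f (k+2) - f (k+1)) with ⟨h',_⟩|⟨h',_⟩ <;>
      rw [h, h'] <;> linarith [a.1, a.2, b.1, b.2]
  have h3 : ∑ k ∈ Finset.range (n-1), (|f (k+1) + f (k+2)| + |f (k+2) - f (k+1)|)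
      ≤ 2 * ((n-1 : ℕ) : ℝ) := by
    calc ∑ k ∈ Finset.range (n-1), (|f (k+1) + f (k+2)| + |f (k+2) - f (k+1)|)
        ≤ ∑ _k ∈ Finset.range (n-1), (2:ℝ) := Finset.sum_le_sum fun k _ => h2 k
      _ = 2 * ((n-1 : ℕ) : ℝ) := by simp [mul_comm]
  rw [Finset.sum_add_distrib] at h3
  have hc : ((n-1 : ℕ) : ℝ) = (n : ℝ) - 1 := by
    rw [Nat.cast_sub hn]; norm_num
  rw [hc] at h3
  linarith

lemma pair_plus (γ p q d e i j r s : ℝ) (hγ : 0 ≤ γ)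
    (hγp : γ ≤ p) (hγq : γ ≤ q)
    (hd : |d| ≤ 1) (he : |e| ≤ 1) (hr : |r| ≤ 1 - p) (hs : |s| ≤ 1 - q)
    (hi : p * d = i - r) (hj : q * e = j - s) :
    γ * |d + e| ≤ |i + j| + 2*(1-γ) := by
  have key : γ * (d + e) = (i + j) - (r + s) - ((p-γ)*d + (q-γ)*e) := by
    linear_combination hi + hj
  have h1 : |(p-γ)*d| ≤ p - γ := by
    rw [abs_mul, abs_of_nonneg (by linarith)]
    nlinarith [abs_nonneg d]
  have h2 : |(q-γ)*e| ≤ q - γ := by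
    rw [abs_mul, abs_of_nonneg (by linarith)]
    nlinarith [abs_nonneg e]
  have h3 : |γ * (d+e)| ≤ |i + j| + (|r| + |s|) + (|(p-γ)*d| + |(q-γ)*e|) := by
    rw [key]
    calc |(i + j) - (r + s) - ((p-γ)*d + (q-γ)*e)|
        ≤ |(i + j) - (r + s)| + |(p-γ)*d + (q-γ)*e| := abs_sub _ _
      _ ≤ (|i + j| + |r + s|) + (|(p-γ)*d| + |(q-γ)*e|) :=
          add_le_add (abs_sub _ _) (abs_add_le _ _)
      _ ≤ _ := by gcongr; exact abs_add_le _ _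
  rw [abs_mul, abs_of_nonneg hγ] at h3
  linarith

lemma pair_minus (γ p q d e i j r s : ℝ) (hγ : 0 ≤ γ)
    (hγp : γ ≤ p) (hγq : γ ≤ q)
    (hd : |d| ≤ 1) (he : |e| ≤ 1) (hr : |r| ≤ 1 - p) (hs : |s| ≤ 1 - q)
    (hi : p * d = i - r) (hj : q * e = j - s) :
    γ * |d - e| ≤ |i - j| + 2*(1-γ) := by
  have := pair_plus γ p q d (-e) i (-j) r (-s) hγ hγp hγq hd
    (by rwa [abs_neg]) hr (by rwa [abs_neg]) hi (by linarith)
  simpa [sub_eq_add_neg] using this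

/-- PBC inequality with coincidence probability: for N ≥ 2, random variables
    A₁,…,A_N, B₁,…,B_N with values in [-1,1], and events Λ₁,…,Λ_{2N} with
    P(Λ_i) ≥ γ, 0 < γ ≤ 1, the chained sum of conditional expectations of
    X_i = A_{a_i} B_{b_i} (a = (1,2,2,3,…,N,N,1), b = (1,1,2,2,…,N,N)) satisfies
    S_{C,N} ≤ (4N-2)/γ - 2N. -/
theorem pbc_with_coincidence
    {Ω : Type*} [MeasurableSpace Ω] (μ : Measure Ω) [IsProbabilityMeasure μ]
    (N : ℕ) (hN : 2 ≤ N) (A B : ℕ → Ω → ℝ)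
    (hAmeas : ∀ i, Measurable (A i)) (hBmeas : ∀ i, Measurable (B i))
    (hAbound : ∀ i x, A i x ∈ Set.Icc (-1 : ℝ) 1)
    (hBbound : ∀ i x, B i x ∈ Set.Icc (-1 : ℝ) 1)
    (Λ : ℕ → Set Ω) (hΛmeas : ∀ i, MeasurableSet (Λ i))
    (γ : ℝ) (hγ0 : 0 < γ) (hγ1 : γ ≤ 1)
    (hΛγ : ∀ i ∈ Finset.Icc 1 (2 * N), γ ≤ (μ (Λ i)).toReal) :
    -- index sequences a_k and b_k for k = 1,…,2N
    let a : ℕ → ℕ := fun k => if k = 2 * N then 1 else k / 2 + 1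
    let b : ℕ → ℕ := fun k => (k + 1) / 2
    -- conditional expectation E(X_k | Λ_k) with X_k = A_{a_k} B_{b_k}
    let CE : ℕ → ℝ := fun k =>
      (∫ x in Λ k, A (a k) x * B (b k) x ∂μ) / (μ (Λ k)).toReal
    (∑ k ∈ Finset.range (N - 1), |CE (2 * k + 1) + CE (2 * k + 2)|)
      + |CE (2 * N - 1) - CE (2 * N)|
      ≤ (4 * (N : ℝ) - 2) / γ - 2 * N := by
  intro a b CE
  have hA1 : ∀ i x, |A i x| ≤ 1 := fun i x => abs_le.mpr ⟨(hAbound i x).1, (hAbound i x).2⟩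
  have hB1 : ∀ i x, |B i x| ≤ 1 := fun i x => abs_le.mpr ⟨(hBbound i x).1, (hBbound i x).2⟩
  set X : ℕ → Ω → ℝ := fun k x => A (a k) x * B (b k) x with hXdef
  have hXabs : ∀ k x, |X k x| ≤ 1 := by
    intro k x
    rw [hXdef]
    calc |A (a k) x * B (b k) x| = |A (a k) x| * |B (b k) x| := abs_mul _ _
      _ ≤ 1 * 1 := mul_le_mul (hA1 _ _) (hB1 _ _) (abs_nonneg _) zero_le_one
      _ = 1 := one_mul 1
  have hXmeas : ∀ k, Measurable (X k) := fun k => (hAmeas _).mul (hBmeas _)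
  have hXint : ∀ k, Integrable (X k) μ := fun k =>
    (integrable_const (1:ℝ)).mono' (hXmeas k).aestronglyMeasurable
      (ae_of_all _ fun x => by simpa [Real.norm_eq_abs] using hXabs k x)
  set P : ℕ → ℝ := fun k => (μ (Λ k)).toReal with hPdef
  set I : ℕ → ℝ := fun k => ∫ x, X k x ∂μ with hIdef
  set r : ℕ → ℝ := fun k => ∫ x in (Λ k)ᶜ, X k x ∂μ with hrdef
  -- key facts for each relevant index
  have facts : ∀ k ∈ Finset.Icc 1 (2*N),
      γ ≤ P k ∧ |CE k| ≤ 1 ∧ P k * CE k = I k - r k ∧ |r k| ≤ 1 - P k := by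
    intro k hk
    have hγP : γ ≤ P k := hΛγ k hk
    have hP1 : P k ≤ 1 := by
      have h := ENNReal.toReal_mono ENNReal.one_ne_top (prob_le_one (μ := μ) (s := Λ k))
      simpa using h
    have hPpos : 0 < P k := lt_of_lt_of_le hγ0 hγP
    have hsetint : |∫ x in Λ k, X k x ∂μ| ≤ P k := by
      have h := norm_setIntegral_le_of_norm_le_const (μ := μ) (s := Λ k) (C := 1)
        (f := X k) (measure_lt_top μ _) (fun x _ => by simpa [Real.norm_eq_abs] using hXabs k x)
      simpa [Real.norm_eq_abs, measureReal_def] using h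
    have hCEeq : CE k = (∫ x in Λ k, X k x ∂μ) / P k := rfl
    have hCE : |CE k| ≤ 1 := by
      rw [hCEeq, abs_div, abs_of_pos hPpos, div_le_one hPpos]
      exact hsetint
    have hsplit : (∫ x in Λ k, X k x ∂μ) + r k = I k :=
      integral_add_compl (hΛmeas k) (hXint k)
    have hPCE : P k * CE k = I k - r k := by
      rw [hCEeq, mul_div_cancel₀ _ (ne_of_gt hPpos)]
      linarith
    have hcompl : (μ (Λ k)ᶜ).toReal = 1 - P k := by
      rw [prob_compl_eq_one_sub (hΛmeas k),
        ENNReal.toReal_sub_of_le prob_le_one ENNReal.one_ne_top]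
      simp [hPdef]
    have hr : |r k| ≤ 1 - P k := by
      have h := norm_setIntegral_le_of_norm_le_const (μ := μ) (s := (Λ k)ᶜ) (C := 1)
        (f := X k) (measure_lt_top μ _) (fun x _ => by simpa [Real.norm_eq_abs] using hXabs k x)
      rw [measureReal_def, hcompl] at h
      simpa [Real.norm_eq_abs, hrdef] using h
    exact ⟨hγP, hCE, hPCE, hr⟩
  -- pair bounds
  have hpairs : ∀ k ∈ Finset.range (N-1),
      γ * |CE (2*k+1) + CE (2*k+2)| ≤ |I (2*k+1) + I (2*k+2)| + 2*(1-γ) := by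
    intro k hk
    have hk' := Finset.mem_range.mp hk
    have m1 : 2*k+1 ∈ Finset.Icc 1 (2*N) := by rw [Finset.mem_Icc]; omega
    have m2 : 2*k+2 ∈ Finset.Icc 1 (2*N) := by rw [Finset.mem_Icc]; omega
    obtain ⟨f1,f2,f3,f4⟩ := facts _ m1
    obtain ⟨g1,g2,g3,g4⟩ := facts _ m2
    exact pair_plus γ _ _ _ _ _ _ _ _ hγ0.le f1 g1 f2 g2 f4 g4 f3 g3
  have hlast : γ * |CE (2*N-1) - CE (2*N)| ≤ |I (2*N-1) - I (2*N)| + 2*(1-γ) := by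
    have m1 : 2*N-1 ∈ Finset.Icc 1 (2*N) := by rw [Finset.mem_Icc]; omega
    have m2 : 2*N ∈ Finset.Icc 1 (2*N) := by rw [Finset.mem_Icc]; omega
    obtain ⟨f1,f2,f3,f4⟩ := facts _ m1
    obtain ⟨g1,g2,g3,g4⟩ := facts _ m2
    exact pair_minus γ _ _ _ _ _ _ _ _ hγ0.le f1 g1 f2 g2 f4 g4 f3 g3
  -- Bell (chained) inequality for the unconditional expectations
  have habs : ∀ j k', |I j + I k'| ≤ ∫ x, |X j x + X k' x| ∂μ := by
    intro j k'
    have : I j + I k' = ∫ x, (X j x + X k' x) ∂μ := (integral_add (hXint j) (hXint k')).symm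
    rw [this]
    simpa [Real.norm_eq_abs] using norm_integral_le_integral_norm (fun x => X j x + X k' x) (μ := μ)
  have habs' : |I (2*N-1) - I (2*N)| ≤ ∫ x, |X (2*N-1) x - X (2*N) x| ∂μ := by
    have : I (2*N-1) - I (2*N) = ∫ x, (X (2*N-1) x - X (2*N) x) ∂μ :=
      (integral_sub (hXint _) (hXint _)).symm
    rw [this]
    simpa [Real.norm_eq_abs] using
      norm_integral_le_integral_norm (fun x => X (2*N-1) x - X (2*N) x) (μ := μ)
  have hint1 : ∀ j k', Integrable (fun x => |X j x + X k' x|) μ :=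
    fun j k' => ((hXint j).add (hXint k')).abs
  have hpoint : ∀ x, (∑ k ∈ Finset.range (N-1), |X (2*k+1) x + X (2*k+2) x|)
      + |X (2*N-1) x - X (2*N) x| ≤ 2*(N:ℝ) - 2 := by
    intro x
    have step : ∀ k ∈ Finset.range (N-1),
        |X (2*k+1) x + X (2*k+2) x| ≤ |A (k+1) x + A (k+2) x| := by
      intro k hk
      have hk' := Finset.mem_range.mp hk
      have ha1 : a (2*k+1) = k+1 := by
        show (if 2*k+1 = 2*N then 1 else (2*k+1)/2+1) = k+1
        rw [if_neg (by omega)]; omega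
      have hb1 : b (2*k+1) = k+1 := by show (2*k+1+1)/2 = k+1; omega
      have ha2 : a (2*k+2) = k+2 := by
        show (if 2*k+2 = 2*N then 1 else (2*k+2)/2+1) = k+2
        rw [if_neg (by omega)]; omega
      have hb2 : b (2*k+2) = k+1 := by show (2*k+2+1)/2 = k+1; omega
      rw [hXdef]
      simp only [ha1, hb1, ha2, hb2]
      rw [show A (k+1) x * B (k+1) x + A (k+2) x * B (k+1) x
          = (A (k+1) x + A (k+2) x) * B (k+1) x from by ring, abs_mul]
      calc |A (k+1) x + A (k+2) x| * |B (k+1) x|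
          ≤ |A (k+1) x + A (k+2) x| * 1 :=
            mul_le_mul_of_nonneg_left (hB1 _ _) (abs_nonneg _)
        _ = _ := mul_one _
    have steplast : |X (2*N-1) x - X (2*N) x| ≤ |A N x - A 1 x| := by
      have ha1 : a (2*N-1) = N := by
        show (if 2*N-1 = 2*N then 1 else (2*N-1)/2+1) = N
        rw [if_neg (by omega)]; omega
      have hb1 : b (2*N-1) = N := by show (2*N-1+1)/2 = N; omega
      have ha2 : a (2*N) = 1 := by
        show (if 2*N = 2*N then 1 else (2*N)/2+1) = 1
        rw [if_pos rfl]
      have hb2 : b (2*N) = N := by show (2*N+1)/2 = N; omega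
      rw [hXdef]
      simp only [ha1, hb1, ha2, hb2]
      rw [show A N x * B N x - A 1 x * B N x = (A N x - A 1 x) * B N x from by ring, abs_mul]
      calc |A N x - A 1 x| * |B N x| ≤ |A N x - A 1 x| * 1 :=
            mul_le_mul_of_nonneg_left (hB1 _ _) (abs_nonneg _)
        _ = _ := mul_one _
    calc (∑ k ∈ Finset.range (N-1), |X (2*k+1) x + X (2*k+2) x|) + |X (2*N-1) x - X (2*N) x|
        ≤ (∑ k ∈ Finset.range (N-1), |A (k+1) x + A (k+2) x|) + |A N x - A 1 x| :=
          add_le_add (Finset.sum_le_sum step) steplast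
      _ ≤ 2*(N:ℝ) - 2 := chain_abs N (by omega) (fun i => A i x) (fun i => hA1 i x)
  have hbell : (∑ k ∈ Finset.range (N-1), |I (2*k+1) + I (2*k+2)|) + |I (2*N-1) - I (2*N)|
      ≤ 2*(N:ℝ) - 2 := by
    have hsumint : Integrable (fun x => ∑ k ∈ Finset.range (N-1), |X (2*k+1) x + X (2*k+2) x|) μ := by
      apply integrable_finset_sum
      intro k _
      exact hint1 _ _
    have hGint : Integrable (fun x => |X (2*N-1) x - X (2*N) x|) μ :=
      ((hXint _).sub (hXint _)).abs
    calc (∑ k ∈ Finset.range (N-1), |I (2*k+1) + I (2*k+2)|) + |I (2*N-1) - I (2*N)|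
        ≤ (∑ k ∈ Finset.range (N-1), ∫ x, |X (2*k+1) x + X (2*k+2) x| ∂μ)
            + ∫ x, |X (2*N-1) x - X (2*N) x| ∂μ :=
          add_le_add (Finset.sum_le_sum fun k _ => habs _ _) habs'
      _ = ∫ x, ((∑ k ∈ Finset.range (N-1), |X (2*k+1) x + X (2*k+2) x|)
            + |X (2*N-1) x - X (2*N) x|) ∂μ := by
          rw [integral_add hsumint hGint,
            integral_finset_sum _ (fun k _ => hint1 _ _)]
      _ ≤ ∫ _x, (2*(N:ℝ) - 2) ∂μ :=
          integral_mono (hsumint.add hGint) (integrable_const _) hpoint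
      _ = 2*(N:ℝ) - 2 := by simp
  -- combine
  have hNcast : ((N-1 : ℕ) : ℝ) = (N : ℝ) - 1 := by
    rw [Nat.cast_sub (by omega)]; norm_num
  have hmain : γ * ((∑ k ∈ Finset.range (N-1), |CE (2*k+1) + CE (2*k+2)|)
      + |CE (2*N-1) - CE (2*N)|) ≤ 4*(N:ℝ) - 2 - 2*N*γ := by
    rw [mul_add, Finset.mul_sum]
    have hsum : ∑ k ∈ Finset.range (N-1), γ * |CE (2*k+1) + CE (2*k+2)|
        ≤ ∑ k ∈ Finset.range (N-1), (|I (2*k+1) + I (2*k+2)| + 2*(1-γ)) :=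
      Finset.sum_le_sum hpairs
    rw [Finset.sum_add_distrib, Finset.sum_const, Finset.card_range, nsmul_eq_mul, hNcast] at hsum
    have : (0:ℝ) ≤ 1 - γ := by linarith
    nlinarith [hbell, hlast]
  have hEnd : (4*(N:ℝ)-2)/γ - 2*N = (4*(N:ℝ) - 2 - 2*N*γ)/γ := by
    field_simp
  rw [hEnd, le_div_iff₀ hγ0, mul_comm]
  exact hmain
end

section
/- The sequence γ_{crit,N} = ((2N-1)/(2N))·(1 + tan²(π/(4N))) is strictly increasing in N for integers N ≥ 2, and converges to 1 as N → ∞. -/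
open Real Filter

/-- Rewrite γ in terms of `1 + cos (π/(2n))`. -/
lemma gamma_crit_eq (n : ℕ) (hn : 1 ≤ n) :
    ((2 * (n : ℝ) - 1) / (2 * n)) * (1 + Real.tan (π / (4 * n)) ^ 2) =
      (2 * (n : ℝ) - 1) / ((n : ℝ) * (1 + Real.cos (π / (2 * n)))) := by
  have hn0 : (0:ℝ) < n := by exact_mod_cast hn
  have hθpos : 0 < π / (4 * (n:ℝ)) := by positivity
  have hn1 : (1:ℝ) ≤ n := by exact_mod_cast hn
  have hθlt : π / (4 * (n:ℝ)) < π / 2 := by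
    apply div_lt_div_of_pos_left Real.pi_pos (by norm_num) (by nlinarith)
  have hcos : 0 < Real.cos (π / (4 * (n:ℝ))) :=
    Real.cos_pos_of_mem_Ioo ⟨by linarith [Real.pi_pos], hθlt⟩
  have htan : 1 + Real.tan (π / (4 * n)) ^ 2 = (Real.cos (π / (4 * (n:ℝ))) ^ 2)⁻¹ := by
    rw [← Real.inv_one_add_tan_sq hcos.ne', inv_inv]
  have h2 : π / (2 * (n:ℝ)) = 2 * (π / (4 * n)) := by
    field_simp; ring
  rw [htan, h2, Real.cos_two_mul]
  have : (1 : ℝ) + (2 * Real.cos (π / (4 * (n:ℝ))) ^ 2 - 1)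
      = 2 * Real.cos (π / (4 * (n:ℝ))) ^ 2 := by ring
  rw [this]
  field_simp
  try ring
  try exact Or.inl trivial

set_option maxHeartbeats 1600000 in
/-- One step of monotonicity. -/
lemma gamma_crit_step (n : ℕ) (hn : 2 ≤ n) :
    ((2 * (n : ℝ) - 1) / (2 * n)) * (1 + Real.tan (π / (4 * n)) ^ 2) <
      ((2 * ((n+1 : ℕ) : ℝ) - 1) / (2 * (n+1 : ℕ))) *
        (1 + Real.tan (π / (4 * (n+1 : ℕ))) ^ 2) := by
  have hn0 : (2:ℝ) ≤ n := by exact_mod_cast hn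
  rw [gamma_crit_eq n (by omega), gamma_crit_eq (n+1) (by omega)]
  push_cast
  set x : ℝ := (n : ℝ) with hx
  have hxpos : (0:ℝ) < x := by linarith
  have hπ := Real.pi_pos
  set a : ℝ := π / (2 * x) with ha
  set b : ℝ := π / (2 * (x + 1)) with hb
  -- basic bounds on a and b
  have hapos : 0 < a := by positivity
  have hbpos : 0 < b := by positivity
  have hba : b < a := by
    apply div_lt_div_of_pos_left hπ (by positivity) (by linarith)
  have haq : a ≤ π / 4 := by
    rw [ha]
    apply div_le_div_of_nonneg_left hπ.le (by norm_num) (by linarith)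
  have hbq : b ≤ π / 4 := le_trans hba.le haq
  have hc : Real.cos (π/4) ≤ Real.cos a :=
    Real.cos_le_cos_of_nonneg_of_le_pi hapos.le (by linarith) haq
  rw [Real.cos_pi_div_four] at hc
  have hs2 : (1.41 : ℝ) ≤ Real.sqrt 2 := by
    nlinarith [Real.sq_sqrt (by norm_num : (0:ℝ) ≤ 2), Real.sqrt_nonneg 2]
  set c : ℝ := Real.cos a with hcdef
  set d : ℝ := Real.cos b with hddef
  have hcl : (0.705 : ℝ) ≤ c := by linarith
  have hd1 : d ≤ 1 := Real.cos_le_one b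
  -- bound d - c via product-to-sum
  have hsub : d - c = 2 * Real.sin ((a + b)/2) * Real.sin ((a - b)/2) := by
    rw [hcdef, hddef, Real.cos_sub_cos]
    rw [show (b - a)/2 = -((a - b)/2) by ring, Real.sin_neg]
    ring_nf
  have hu0 : 0 ≤ (a + b)/2 := by linarith
  have huπ : (a + b)/2 ≤ π := by linarith [haq, hbq, hπ]
  have hv0 : 0 ≤ (a - b)/2 := by linarith
  have hvπ : (a - b)/2 ≤ π := by linarith [haq, hbq, hπ]
  have hbd : d - c ≤ 2 * ((a + b)/2) * ((a - b)/2) := by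
    rw [hsub]
    have h1 := Real.sin_le hu0
    have h2 := Real.sin_le hv0
    have h3 := Real.sin_nonneg_of_nonneg_of_le_pi hu0 huπ
    have h4 := Real.sin_nonneg_of_nonneg_of_le_pi hv0 hvπ
    nlinarith
  have hab2 : 2 * ((a + b)/2) * ((a - b)/2) = (a^2 - b^2)/2 := by ring
  rw [hab2] at hbd
  -- substitute definitions of a, b
  have habval : (a^2 - b^2)/2 = π^2 * (2*x + 1) / (8 * x^2 * (x+1)^2) := by
    rw [ha, hb]
    field_simp
    ring
  rw [habval] at hbd
  have hδ : 8 * x^2 * (x+1)^2 * (d - c) ≤ π^2 * (2*x + 1) := by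
    rw [le_div_iff₀ (by positivity)] at hbd
    nlinarith [hbd]
  -- numeric bound on π²
  have hπ2 : π^2 ≤ 9.9225 := by
    nlinarith [Real.pi_lt_d2, hπ]
  -- key polynomial inequality : (2x-1)(x+1)(d-c) < 1 + c
  have key : (2*x - 1) * (x + 1) * (d - c) < 1 + c := by
    have h1 : (2*x - 1) * (8 * x^2 * (x+1)^2 * (d - c)) ≤ (2*x - 1) * (π^2 * (2*x + 1)) :=
      mul_le_mul_of_nonneg_left hδ (by linarith)
    have h2 : (2*x - 1) * (π^2 * (2*x + 1)) ≤ 9.9225 * (4*x^2 - 1) := by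
      have hq : (0:ℝ) ≤ 4*x^2 - 1 := by nlinarith
      nlinarith [mul_le_mul_of_nonneg_left hπ2 hq]
    have h3 : 9.9225 * (4*x^2 - 1) < (1 + c) * (8 * x^2 * (x+1)) := by
      have h31 : (1.705:ℝ) * (8*x^2*(x+1)) ≤ (1+c) * (8*x^2*(x+1)) :=
        mul_le_mul_of_nonneg_right (by linarith) (by positivity)
      have h32 : 9.9225 * (4*x^2 - 1) < (1.705:ℝ) * (8*x^2*(x+1)) := by
        nlinarith [mul_nonneg (by linarith : (0:ℝ) ≤ x - 2) (sq_nonneg x), sq_nonneg x]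
      linarith
    have h4 : (2*x - 1) * (8 * x^2 * (x+1)^2 * (d - c))
        = (8 * x^2 * (x+1)) * ((2*x - 1) * (x + 1) * (d - c)) := by ring
    have h5 : (8 * x^2 * (x+1)) * ((2*x - 1) * (x + 1) * (d - c))
        < (8 * x^2 * (x+1)) * (1 + c) := by
      calc (8 * x^2 * (x+1)) * ((2*x - 1) * (x + 1) * (d - c))
          = (2*x - 1) * (8 * x^2 * (x+1)^2 * (d - c)) := by ring
        _ ≤ (2*x - 1) * (π^2 * (2*x + 1)) := h1
        _ ≤ 9.9225 * (4*x^2 - 1) := h2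
        _ < (1 + c) * (8 * x^2 * (x+1)) := h3
        _ = (8 * x^2 * (x+1)) * (1 + c) := by ring
    exact lt_of_mul_lt_mul_left h5 (by positivity)
  -- conclude
  have hcposd : 0 < x * (1 + c) := by nlinarith
  have hdposd : 0 < (x + 1) * (1 + d) := by
    have hdl : Real.cos (π/4) ≤ d := by
      rw [hddef]
      exact Real.cos_le_cos_of_nonneg_of_le_pi hbpos.le (by linarith) hbq
    rw [Real.cos_pi_div_four] at hdl
    have : 0 < 1 + d := by linarith
    positivity
  rw [div_lt_div_iff₀ hcposd hdposd]
  nlinarith [key]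

/-- γ_{crit,N} = ((2N-1)/(2N))·(1 + tan²(π/(4N))) is strictly increasing in N
    for integers N ≥ 2 and converges to 1 as N → ∞. -/
theorem gamma_crit_monotone_and_limit :
    (∀ M N : ℕ, 2 ≤ M → M < N →
      ((2 * (M : ℝ) - 1) / (2 * M)) * (1 + Real.tan (π / (4 * M)) ^ 2) <
        ((2 * (N : ℝ) - 1) / (2 * N)) * (1 + Real.tan (π / (4 * N)) ^ 2)) ∧
    Tendsto (fun N : ℕ =>
        ((2 * (N : ℝ) - 1) / (2 * N)) * (1 + Real.tan (π / (4 * N)) ^ 2))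
      atTop (nhds 1) := by
  constructor
  · intro M N hM hMN
    induction N, hMN using Nat.le_induction with
    | base => exact gamma_crit_step M hM
    | succ n hn ih =>
      exact lt_trans ih (gamma_crit_step n (by omega))
  · have h1 : Tendsto (fun N : ℕ => (2 * (N : ℝ) - 1) / (2 * N)) atTop (nhds 1) := by
      have h0 : Tendsto (fun N : ℕ => 1 - (1/2 : ℝ) / N) atTop (nhds (1 - 0)) :=
        tendsto_const_nhds.sub (tendsto_const_div_atTop_nhds_zero_nat (1/2))
      rw [sub_zero] at h0
      refine h0.congr' ?_
      filter_upwards [eventually_ge_atTop 1] with N hN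
      have hN0 : (N:ℝ) ≠ 0 := by positivity
      field_simp
      try ring
    have h2 : Tendsto (fun N : ℕ => Real.tan (π / (4 * N))) atTop (nhds 0) := by
      have ha : Tendsto (fun N : ℕ => π / (4 * (N:ℝ))) atTop (nhds 0) := by
        have := tendsto_const_div_atTop_nhds_zero_nat (π/4)
        simpa [div_div] using this
      have hcont : ContinuousAt Real.tan 0 := Real.continuousAt_tan.mpr (by simp)
      have := hcont.tendsto.comp ha
      simpa [Real.tan_zero, Function.comp_def] using this
    have h3 : Tendsto (fun N : ℕ => 1 + Real.tan (π / (4 * N)) ^ 2) atTop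
        (nhds (1 + 0^2)) := tendsto_const_nhds.add (h2.pow 2)
    have := h1.mul h3
    simpa using this
end

section
/- For every integer N ≥ 2, the critical coincidence probability strictly exceeds the critical detection efficiency: ((2N-1)/(2N))·(1 + tan²(π/(4N))) > 2/((N/(N-1))·cos(π/(2N)) + 1). -/
set_option maxHeartbeats 1000000


open Real

/-- For every integer N ≥ 2, the critical coincidence probability strictly exceeds
    the critical detection efficiency:
    ((2N-1)/(2N))·(1 + tan²(π/(4N))) > 2/((N/(N-1))·cos(π/(2N)) + 1). -/
theorem gamma_crit_gt_eta_crit (N : ℕ) (hN : 2 ≤ N) :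
    2 / (((N : ℝ) / ((N : ℝ) - 1)) * Real.cos (π / (2 * N)) + 1) <
      ((2 * (N : ℝ) - 1) / (2 * N)) * (1 + Real.tan (π / (4 * N)) ^ 2) := by
  set n : ℝ := (N : ℝ) with hn_def
  have hn : (2 : ℝ) ≤ n := by rw [hn_def]; exact_mod_cast hN
  have hn0 : (0 : ℝ) < n := by linarith
  have hnm1 : (0 : ℝ) < n - 1 := by linarith
  have hπ : (0 : ℝ) < π := Real.pi_pos
  have hπlt : π < 3.15 := Real.pi_lt_d2
  have hπgt : 3.14 < π := by linarith [Real.pi_gt_d6]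
  have hx0 : 0 < π / (2 * n) := by positivity
  have hxlt : π / (2 * n) < π / 2 := by
    rw [div_lt_div_iff₀ (by linarith) (by norm_num)]
    nlinarith
  have hy0 : 0 < π / (4 * n) := by positivity
  have hylt : π / (4 * n) < π / 2 := by
    rw [div_lt_div_iff₀ (by linarith) (by norm_num)]
    nlinarith
  set c : ℝ := Real.cos (π / (2 * n)) with hc_def
  set t : ℝ := Real.tan (π / (4 * n)) with ht_def
  have hc_lb : 1 - (π / (2 * n)) ^ 2 / 2 ≤ c := Real.one_sub_sq_div_two_le_cos
  have hc_pos : 0 < c := Real.cos_pos_of_mem_Ioo ⟨by linarith, hxlt⟩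
  have ht_lb : π / (4 * n) < t := Real.lt_tan hy0 hylt
  have ht_pos : 0 < t := lt_trans hy0 ht_lb
  have hd : 0 < n / (n - 1) * c + 1 := by positivity
  rw [div_lt_iff₀ hd]
  have hq1 : (9.85 : ℝ) < π ^ 2 := by nlinarith
  have hq2 : π ^ 2 < (9.93 : ℝ) := by nlinarith
  -- lower bound for n * c
  have hu : 8 * n * (n * c) ≥ 8 * n ^ 2 - π ^ 2 := by
    have h : (π / (2 * n)) ^ 2 / 2 = π ^ 2 / (8 * n ^ 2) := by field_simp; ring
    rw [h] at hc_lb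
    have h2 : 8 * n * (n * (π ^ 2 / (8 * n ^ 2))) = π ^ 2 := by field_simp
    have h3 := mul_le_mul_of_nonneg_left hc_lb (le_of_lt hn0)
    have h4 := mul_le_mul_of_nonneg_left h3 (by linarith : (0:ℝ) ≤ 8 * n)
    nlinarith [h4, h2]
  -- lower bound for t ^ 2
  have hs : 16 * n ^ 2 * t ^ 2 ≥ π ^ 2 := by
    have h1 : (π / (4 * n)) ^ 2 ≤ t ^ 2 :=
      pow_le_pow_left₀ (le_of_lt hy0) (le_of_lt ht_lb) 2
    have h2 : 16 * n ^ 2 * (π / (4 * n)) ^ 2 = π ^ 2 := by field_simp; ring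
    have h3 := mul_le_mul_of_nonneg_left h1 (by positivity : (0:ℝ) ≤ 16 * n ^ 2)
    rw [h2] at h3
    exact h3
  -- key polynomial inequality
  have key : 4 * n * (n - 1) < (2 * n - 1) * (1 + t ^ 2) * (n * c + n - 1) := by
    have hA : 8 * n * (n * c + n - 1) ≥ 16 * n ^ 2 - 8 * n - π ^ 2 := by nlinarith [hu]
    have hApos : (0 : ℝ) < 16 * n ^ 2 - 8 * n - π ^ 2 := by nlinarith [hq2, sq_nonneg (n - 2)]
    have hB : 16 * n ^ 2 * (1 + t ^ 2) ≥ 16 * n ^ 2 + π ^ 2 := by nlinarith [hs]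
    have hq4a : π ^ 4 < (98.61 : ℝ) := by nlinarith [hq1, hq2]
    have hPpos : 128 * n ^ 3 - 16 * π ^ 2 * n ^ 2 - 2 * π ^ 4 * n
        + 8 * π ^ 2 * n + π ^ 4 > 0 := by
      nlinarith [sq_nonneg (n - 2), mul_pos hn0 hn0, mul_pos (mul_pos hn0 hn0) hn0,
        mul_nonneg (mul_nonneg (by linarith : (0:ℝ) ≤ n - 2) hn0.le) hn0.le]
    have hfac : (2 * n - 1) * ((16 * n ^ 2 + π ^ 2) * (16 * n ^ 2 - 8 * n - π ^ 2))
        > 512 * n ^ 5 - 512 * n ^ 4 := by nlinarith [hPpos]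
    have h1' := mul_le_mul_of_nonneg_left
      (mul_le_mul hB hA hApos.le (by positivity : (0:ℝ) ≤ 16 * n ^ 2 * (1 + t ^ 2)))
      (by linarith : (0:ℝ) ≤ 2 * n - 1)
    have hmul : 4 * n * (n - 1) * (128 * n ^ 3)
        < (2 * n - 1) * (1 + t ^ 2) * (n * c + n - 1) * (128 * n ^ 3) := by
      nlinarith [h1', hfac]
    exact lt_of_mul_lt_mul_right hmul (by positivity)
  have heq : (2 * n - 1) / (2 * n) * (1 + t ^ 2) * (n / (n - 1) * c + 1)
      = (2 * n - 1) * (1 + t ^ 2) * (n * c + n - 1) / (2 * n * (n - 1)) := by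
    rw [eq_div_iff (by positivity : (2 * n * (n - 1)) ≠ 0)]
    field_simp
    ring_nf
  rw [heq, lt_div_iff₀ (by positivity)]
  linarith
end

section
/- The sequence η_{crit,N} = 2/((N/(N-1))·cos(π/(2N)) + 1) is strictly increasing in N for integers N ≥ 2 and converges to 1 as N → ∞. -/
open Real Filter

noncomputable def gg (x : ℝ) : ℝ := x / (x - 1) * Real.cos (π / (2 * x))

lemma gg_hasDerivAt {x : ℝ} (hx : 1 < x) :
    HasDerivAt gg
      ((-1 / (x - 1) ^ 2) * Real.cos (π / (2 * x))
        + (x / (x - 1)) * (Real.sin (π / (2 * x)) * (π * 2 / (2 * x) ^ 2))) x := by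
  have hx1 : x - 1 ≠ 0 := by nlinarith
  have hx0 : x ≠ 0 := by nlinarith
  have h2x : 2 * x ≠ 0 := by positivity
  have hu : HasDerivAt (fun y : ℝ => y / (y - 1)) (-1 / (x - 1) ^ 2) x := by
    have := (hasDerivAt_id x).div ((hasDerivAt_id x).sub_const 1) hx1
    refine this.congr_deriv ?_
    simp only [id]
    field_simp
    ring
  have hinner : HasDerivAt (fun y : ℝ => π / (2 * y)) (-(π * 2) / (2 * x) ^ 2) x := by
    have := (hasDerivAt_const x π).div ((hasDerivAt_id x).const_mul 2) h2x
    refine this.congr_deriv ?_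
    simp [id]
  have hv : HasDerivAt (fun y : ℝ => Real.cos (π / (2 * y)))
      (Real.sin (π / (2 * x)) * (π * 2 / (2 * x) ^ 2)) x := by
    have := (Real.hasDerivAt_cos (π / (2 * x))).comp x hinner
    refine this.congr_deriv ?_
    ring
  have := hu.mul hv
  exact this

lemma theta_bounds {x : ℝ} (hx : 2 ≤ x) :
    0 < π / (2 * x) ∧ π / (2 * x) ≤ π / 4 := by
  have hπ := Real.pi_pos
  constructor
  · positivity
  · rw [div_le_div_iff₀ (by linarith) (by norm_num)]
    nlinarith [Real.pi_pos]

lemma cos_ge {x : ℝ} (hx : 2 ≤ x) : Real.sqrt 2 / 2 ≤ Real.cos (π / (2 * x)) := by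
  obtain ⟨h1, h2⟩ := theta_bounds hx
  rw [← Real.cos_pi_div_four]
  apply Real.cos_le_cos_of_nonneg_of_le_pi (le_of_lt h1) _ h2
  have := Real.pi_pos
  linarith

lemma cos_ge' {x : ℝ} (hx : 2 ≤ x) : (0.7 : ℝ) ≤ Real.cos (π / (2 * x)) := by
  have h := cos_ge hx
  have : (1.4 : ℝ) ≤ Real.sqrt 2 := by
    rw [show (1.4:ℝ) = Real.sqrt (1.4^2) by rw [Real.sqrt_sq]; norm_num]
    apply Real.sqrt_le_sqrt; norm_num
  linarith

lemma gg_deriv_neg {x : ℝ} (hx : 2 < x) : deriv gg x < 0 := by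
  have hx2 : 2 ≤ x := le_of_lt hx
  have hd := (gg_hasDerivAt (by linarith : 1 < x)).deriv
  rw [hd]
  set θ := π / (2 * x) with hθ
  obtain ⟨hθ0, hθ4⟩ := theta_bounds hx2
  have hsin : Real.sin θ < θ := Real.sin_lt hθ0
  have hsin0 : 0 ≤ Real.sin θ := Real.sin_nonneg_of_nonneg_of_le_pi (le_of_lt hθ0)
    (by have := Real.pi_pos; linarith)
  have hcos := cos_ge' hx2
  rw [← hθ] at hcos
  have hπ : π < 3.15 := by
    have := Real.pi_lt_d2
    linarith
  have hπ0 := Real.pi_pos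
  set E := (-1 / (x - 1) ^ 2) * Real.cos θ + (x / (x - 1)) * (Real.sin θ * (π * 2 / (2 * x) ^ 2))
  have hx1' : (0:ℝ) < x - 1 := by linarith
  have hc : (0:ℝ) < 2 * x ^ 2 * (x - 1) ^ 2 := by positivity
  have hEc : E * (2 * x ^ 2 * (x - 1) ^ 2) = -2 * x ^ 2 * Real.cos θ + x * (x - 1) * π * Real.sin θ := by
    have hx1 : x - 1 ≠ 0 := by nlinarith
    have hx0 : x ≠ 0 := by nlinarith
    simp only [E]
    field_simp
  have hkey : E * (2 * x ^ 2 * (x - 1) ^ 2) < 0 := by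
    rw [hEc]
    have h1 : x * (x - 1) * π * Real.sin θ ≤ x * (x - 1) * π * θ := by
      have : (0:ℝ) ≤ x * (x - 1) * π := by nlinarith
      nlinarith
    have h2 : x * (x - 1) * π * θ = π ^ 2 * (x - 1) / 2 := by
      rw [hθ]
      field_simp
    -- need π²(x-1)/2 < 2x²·cos θ
    have hπsq : π ^ 2 < 9.9225 := by nlinarith
    have hx2sq : (0.7:ℝ) * x ^ 2 ≤ x ^ 2 * Real.cos θ := by nlinarith [sq_nonneg x]
    nlinarith [sq_nonneg (x - 2)]
  by_contra h
  push_neg at h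
  nlinarith [mul_nonneg h (le_of_lt hc)]

lemma gg_anti : StrictAntiOn gg (Set.Ici (2:ℝ)) := by
  apply strictAntiOn_of_deriv_neg (convex_Ici 2)
  · apply ContinuousOn.mul
    · apply ContinuousOn.div (by fun_prop) (by fun_prop)
      intro x hx
      simp only [Set.mem_Ici] at hx
      intro h; nlinarith [sub_eq_zero.mp h]
    · apply Real.continuous_cos.comp_continuousOn
      apply ContinuousOn.div continuousOn_const (by fun_prop)
      intro x hx
      simp only [Set.mem_Ici] at hx
      positivity
  · intro x hx
    rw [interior_Ici] at hx
    exact gg_deriv_neg hx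

lemma gg_pos {x : ℝ} (hx : 2 ≤ x) : 0 < gg x := by
  obtain ⟨hθ0, hθ4⟩ := theta_bounds hx
  have hcos : 0 < Real.cos (π / (2 * x)) := by
    have := cos_ge' hx; linarith
  have : 0 < x / (x - 1) := by
    apply div_pos <;> linarith
  exact mul_pos this hcos

/-- η_{crit,N} = 2/((N/(N-1))·cos(π/(2N)) + 1) is strictly increasing in N
    for integers N ≥ 2 and converges to 1 as N → ∞. -/
theorem eta_crit_monotone_and_limit :
    (∀ M N : ℕ, 2 ≤ M → M < N →
      2 / (((M : ℝ) / ((M : ℝ) - 1)) * Real.cos (π / (2 * M)) + 1) <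
        2 / (((N : ℝ) / ((N : ℝ) - 1)) * Real.cos (π / (2 * N)) + 1)) ∧
    Tendsto (fun N : ℕ =>
        2 / (((N : ℝ) / ((N : ℝ) - 1)) * Real.cos (π / (2 * N)) + 1))
      atTop (nhds 1) := by
  constructor
  · intro M N hM hMN
    have hMr : (2:ℝ) ≤ (M:ℝ) := by exact_mod_cast hM
    have hNr : (2:ℝ) ≤ (N:ℝ) := by
      have : 2 ≤ N := le_trans hM (le_of_lt hMN)
      exact_mod_cast this
    have hlt : (M:ℝ) < (N:ℝ) := by exact_mod_cast hMN
    have hanti := gg_anti (Set.mem_Ici.mpr hMr) (Set.mem_Ici.mpr hNr) hlt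
    have hposN := gg_pos hNr
    have hposM := gg_pos hMr
    have : 2 / (gg M + 1) < 2 / (gg N + 1) := by
      apply div_lt_div_of_pos_left (by norm_num) (by linarith) (by linarith)
    simpa [gg] using this
  · have h1 : Tendsto (fun x : ℝ => x / (x - 1)) atTop (nhds 1) := by
      have ha : Tendsto (fun x : ℝ => 1 + (x - 1)⁻¹) atTop (nhds (1 + 0)) :=
        tendsto_const_nhds.add
          (tendsto_inv_atTop_zero.comp (tendsto_atTop_add_const_right _ (-1) tendsto_id))
      rw [add_zero] at ha
      apply ha.congr'
      filter_upwards [eventually_ge_atTop (2:ℝ)] with x hx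
      have : x - 1 ≠ 0 := by intro h; nlinarith [sub_eq_zero.mp h]
      field_simp
      ring
    have hcast : Tendsto (fun n : ℕ => (n:ℝ)) atTop atTop := tendsto_natCast_atTop_atTop
    have h1' : Tendsto (fun n : ℕ => (n:ℝ) / ((n:ℝ) - 1)) atTop (nhds 1) :=
      h1.comp hcast
    have hθ : Tendsto (fun n : ℕ => π / (2 * (n:ℝ))) atTop (nhds 0) :=
      Tendsto.div_atTop tendsto_const_nhds (Tendsto.const_mul_atTop two_pos hcast)
    have h2 : Tendsto (fun n : ℕ => Real.cos (π / (2 * (n:ℝ)))) atTop (nhds 1) := by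
      have := (Real.continuous_cos.tendsto 0).comp hθ
      simpa [Function.comp_def] using this
    have hf : Tendsto (fun n : ℕ => ((n:ℝ) / ((n:ℝ) - 1)) * Real.cos (π / (2 * (n:ℝ))))
        atTop (nhds 1) := by
      have := h1'.mul h2
      simpa using this
    have hfinal : Tendsto (fun n : ℕ =>
        2 / (((n:ℝ) / ((n:ℝ) - 1)) * Real.cos (π / (2 * (n:ℝ))) + 1))
        atTop (nhds (2 / (1 + 1))) :=
      tendsto_const_nhds.div (hf.add tendsto_const_nhds) (by norm_num)
    norm_num at hfinal
    exact hfinal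
end

section
/- If δ := inf_i P(Λ_I)/P(Λ_i) > 0 where Λ_I = ⋂_{j=1}^{2N} Λ_j, and X_1, ..., X_{2N} are random variables bounded in [-1,1], then S_{C,N} ≤ δ·S_I + 2N(1-δ), where S_I is the chained Bell expression computed with conditional expectations on Λ_I and S_{C,N} is computed with conditional expectations E(X_i|Λ_i). -/
open MeasureTheory Finset

/-- If δ := inf_i P(Λ_I)/P(Λ_i) > 0 with Λ_I = ⋂_{j=1}^{2N} Λ_j, and X₁,…,X_{2N}
    are random variables bounded in [-1,1], then S_{C,N} ≤ δ·S_I + 2N(1-δ),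
    where S_I uses conditional expectations on Λ_I and S_{C,N} uses E(X_i|Λ_i). -/
theorem chained_delta_bound
    {Ω : Type*} [MeasurableSpace Ω] (μ : Measure Ω) [IsProbabilityMeasure μ]
    (N : ℕ) (hN : 2 ≤ N) (X : ℕ → Ω → ℝ)
    (hXmeas : ∀ i, Measurable (X i))
    (hXbound : ∀ i x, X i x ∈ Set.Icc (-1 : ℝ) 1)
    (Λ : ℕ → Set Ω) (hΛmeas : ∀ i, MeasurableSet (Λ i))
    (hΛpos : ∀ i ∈ Finset.Icc 1 (2 * N), 0 < (μ (Λ i)).toReal) :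
    let ΛI : Set Ω := ⋂ j ∈ Finset.Icc 1 (2 * N), Λ j
    let δ : ℝ := ⨅ i : Fin (2 * N), (μ ΛI).toReal / (μ (Λ (i + 1))).toReal
    -- conditional expectations of X_k given Λ_k resp. Λ_I
    let CE : ℕ → ℝ := fun k => (∫ x in Λ k, X k x ∂μ) / (μ (Λ k)).toReal
    let CEI : ℕ → ℝ := fun k => (∫ x in ΛI, X k x ∂μ) / (μ ΛI).toReal
    0 < δ →
    (∑ k ∈ Finset.range (N - 1), |CE (2 * k + 1) + CE (2 * k + 2)|)
        + |CE (2 * N - 1) - CE (2 * N)|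
      ≤ δ * ((∑ k ∈ Finset.range (N - 1), |CEI (2 * k + 1) + CEI (2 * k + 2)|)
          + |CEI (2 * N - 1) - CEI (2 * N)|)
        + 2 * N * (1 - δ) := by
  intro ΛI δ CE CEI hδ
  have hΛImeas : MeasurableSet ΛI := Finset.measurableSet_biInter _ fun i _ => hΛmeas i
  have hsub : ∀ i ∈ Finset.Icc 1 (2 * N), ΛI ⊆ Λ i := fun i hi => Set.biInter_subset_of_mem hi
  have hbdd : BddBelow (Set.range fun i : Fin (2 * N) =>
      (μ ΛI).toReal / (μ (Λ (i + 1))).toReal) :=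
    ⟨0, by rintro x ⟨i, rfl⟩; positivity⟩
  have hδle : ∀ i ∈ Finset.Icc 1 (2 * N), δ ≤ (μ ΛI).toReal / (μ (Λ i)).toReal := by
    intro i hi
    simp only [Finset.mem_Icc] at hi
    have h := ciInf_le hbdd (⟨i - 1, by omega⟩ : Fin (2 * N))
    simpa [Nat.sub_add_cancel hi.1] using h
  have h1mem : (1 : ℕ) ∈ Finset.Icc 1 (2 * N) := by simp; omega
  have hQpos : 0 < (μ ΛI).toReal := by
    rcases (ENNReal.toReal_nonneg (a := μ ΛI)).lt_or_eq with h | h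
    · exact h
    · exfalso
      have := hδle 1 h1mem
      rw [← h] at this
      simp at this
      linarith
  have hint : ∀ i, Integrable (X i) μ := fun i =>
    (integrable_const (1 : ℝ)).mono' (hXmeas i).aestronglyMeasurable
      (Filter.Eventually.of_forall fun x => by
        have h := hXbound i x
        rw [Real.norm_eq_abs, abs_le]; exact ⟨h.1, h.2⟩)
  have habs : ∀ (i : ℕ) (s : Set Ω), |∫ x in s, X i x ∂μ| ≤ (μ s).toReal := by
    intro i s
    have h := norm_setIntegral_le_of_norm_le_const (μ := μ) (s := s) (C := 1)
      (measure_lt_top μ s)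
      (fun x _ => by
        have h := hXbound i x
        rw [Real.norm_eq_abs, abs_le]; exact ⟨h.1, h.2⟩)
    rw [one_mul, Real.norm_eq_abs] at h; exact h
  have key : ∀ i ∈ Finset.Icc 1 (2 * N), |CE i - δ * CEI i| ≤ 1 - δ := by
    intro i hi
    have hPpos : 0 < (μ (Λ i)).toReal := hΛpos i hi
    have hQP : (μ ΛI).toReal ≤ (μ (Λ i)).toReal :=
      ENNReal.toReal_mono (measure_ne_top μ _) (measure_mono (hsub i hi))
    set A := ∫ x in ΛI, X i x ∂μ with hA'
    set B := ∫ x in Λ i \ ΛI, X i x ∂μ with hB'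
    set P := (μ (Λ i)).toReal
    set Q := (μ ΛI).toReal
    have hsplit : ∫ x in Λ i, X i x ∂μ = A + B := by
      rw [← setIntegral_union Set.disjoint_sdiff_right ((hΛmeas i).diff hΛImeas)
        (hint i).integrableOn (hint i).integrableOn, Set.union_diff_cancel (hsub i hi)]
    have hdiff : (μ (Λ i \ ΛI)).toReal = P - Q := by
      rw [measure_diff (hsub i hi) hΛImeas.nullMeasurableSet (measure_ne_top μ ΛI),
        ENNReal.toReal_sub_of_le (measure_mono (hsub i hi)) (measure_ne_top μ _)]
    have hAle : |A| ≤ Q := habs i ΛI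
    have hBle : |B| ≤ P - Q := by rw [← hdiff]; exact habs i _
    have hδi : δ ≤ Q / P := hδle i hi
    have hnn : 0 ≤ 1 / P - δ / Q := by
      rw [sub_nonneg, div_le_div_iff₀ hQpos hPpos]
      calc δ * P ≤ (Q / P) * P := by nlinarith
        _ = 1 * Q := by field_simp
    have hexpr : CE i - δ * CEI i = A * (1 / P - δ / Q) + B * (1 / P) := by
      show (∫ x in Λ i, X i x ∂μ) / P - δ * (A / Q) = _
      rw [hsplit]; field_simp; ring
    rw [hexpr]
    calc |A * (1 / P - δ / Q) + B * (1 / P)|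
        ≤ |A| * (1 / P - δ / Q) + |B| * (1 / P) := by
          refine (abs_add_le _ _).trans ?_
          rw [abs_mul, abs_mul, abs_of_nonneg hnn, abs_of_nonneg (by positivity : (0:ℝ) ≤ 1 / P)]
      _ ≤ Q * (1 / P - δ / Q) + (P - Q) * (1 / P) :=
          add_le_add (mul_le_mul_of_nonneg_right hAle hnn)
            (mul_le_mul_of_nonneg_right hBle (by positivity))
      _ = 1 - δ := by field_simp; ring
  have pair_add : ∀ i j, i ∈ Finset.Icc 1 (2 * N) → j ∈ Finset.Icc 1 (2 * N) →
      |CE i + CE j| ≤ δ * |CEI i + CEI j| + 2 * (1 - δ) := by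
    intro i j hi hj
    have hi' := key i hi; have hj' := key j hj
    have he : CE i + CE j
        = δ * (CEI i + CEI j) + ((CE i - δ * CEI i) + (CE j - δ * CEI j)) := by ring
    calc |CE i + CE j|
        ≤ |δ * (CEI i + CEI j)| + (|CE i - δ * CEI i| + |CE j - δ * CEI j|) := by
          rw [he]; exact (abs_add_le _ _).trans (by gcongr; exact abs_add_le _ _)
      _ ≤ δ * |CEI i + CEI j| + 2 * (1 - δ) := by
          rw [abs_mul, abs_of_pos hδ]; linarith
  have pair_sub : ∀ i j, i ∈ Finset.Icc 1 (2 * N) → j ∈ Finset.Icc 1 (2 * N) →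
      |CE i - CE j| ≤ δ * |CEI i - CEI j| + 2 * (1 - δ) := by
    intro i j hi hj
    have hi' := key i hi; have hj' := key j hj
    have he : CE i - CE j
        = δ * (CEI i - CEI j) + ((CE i - δ * CEI i) - (CE j - δ * CEI j)) := by ring
    calc |CE i - CE j|
        ≤ |δ * (CEI i - CEI j)| + (|CE i - δ * CEI i| + |CE j - δ * CEI j|) := by
          rw [he]; exact (abs_add_le _ _).trans (by gcongr; exact abs_sub _ _)
      _ ≤ δ * |CEI i - CEI j| + 2 * (1 - δ) := by
          rw [abs_mul, abs_of_pos hδ]; linarith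
  have hsum : ∀ k ∈ Finset.range (N - 1),
      |CE (2 * k + 1) + CE (2 * k + 2)|
        ≤ δ * |CEI (2 * k + 1) + CEI (2 * k + 2)| + 2 * (1 - δ) := by
    intro k hk
    simp only [Finset.mem_range] at hk
    exact pair_add _ _ (by simp only [Finset.mem_Icc]; omega)
      (by simp only [Finset.mem_Icc]; omega)
  have hlast : |CE (2 * N - 1) - CE (2 * N)|
      ≤ δ * |CEI (2 * N - 1) - CEI (2 * N)| + 2 * (1 - δ) :=
    pair_sub _ _ (by simp only [Finset.mem_Icc]; omega)
      (by simp only [Finset.mem_Icc]; omega)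
  calc (∑ k ∈ Finset.range (N - 1), |CE (2 * k + 1) + CE (2 * k + 2)|)
        + |CE (2 * N - 1) - CE (2 * N)|
      ≤ (∑ k ∈ Finset.range (N - 1),
          (δ * |CEI (2 * k + 1) + CEI (2 * k + 2)| + 2 * (1 - δ)))
        + (δ * |CEI (2 * N - 1) - CEI (2 * N)| + 2 * (1 - δ)) :=
        add_le_add (Finset.sum_le_sum hsum) hlast
    _ = δ * ((∑ k ∈ Finset.range (N - 1), |CEI (2 * k + 1) + CEI (2 * k + 2)|)
          + |CEI (2 * N - 1) - CEI (2 * N)|) + 2 * N * (1 - δ) := by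
        rw [Finset.sum_add_distrib, Finset.sum_const, Finset.card_range, ← Finset.mul_sum,
          nsmul_eq_mul, Nat.cast_sub (by omega : 1 ≤ N)]
        push_cast
        ring
end
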